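/- The diagonal entries of the covariance matrix V^P := ∑_{ẽ∈Ẽ} q̄_{ẽ} (ψ * δ^{ẽ} * ψ * S q + ψ * S δ^{ẽ})^{⊗2} − ∑_{ĩ∈E} μ_{ĩĩ} (ψ * q^{ĩ} * ψ * S q + ψ * S q^{ĩ})^{⊗2} are given, for e = (i,j,k) ∈ Ẽ, by V^P_{ee} = ∑_{ĩ∈E} μ_{ĩĩ} { ∑_{j̃∈E} [ (C^{ij}_{ĩj̃} − 1{ĩ=j} Ψ_{ij})² * q_{ĩj̃} ](k) − [ ∑_{j̃∈E} C^{ij}_{ĩj̃} * q_{ĩj̃} − 1{ĩ=j} ψ_{ij} * H_j ]²(k) }, where Ψ_{ij}(k) := ∑_{k'≤k} ψ_{ij}(k'), H_j(k) := ∑_{j'∈E}∑_{k'≤k} q_{jj'}(k') and C^{ij}_{ĩj̃} := ψ_{iĩ} * ψ_{j̃j} * (1 − H_j). -/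

import Mathlib

open MeasureTheory Filter Topology Finset ProbabilityTheory

noncomputable section

namespace SMCPaper

variable {E : Type} [Fintype E] [DecidableEq E] {Ω : Type} [MeasurableSpace Ω]

/-- `q` is a (discrete-time) semi-Markov kernel on the finite state space `E`:
nonnegative entries, `q i j 0 = 0`, and total mass `1` from every state. -/
def IsSemiMarkovKernel (q : E → E → ℕ → ℝ) : Prop :=
  (∀ i j k, 0 ≤ q i j k) ∧ (∀ i j, q i j 0 = 0) ∧
    ∀ i, HasSum (fun p : E × ℕ => q i p.1 p.2) 1

/-- The sojourn times `X n = S n − S (n−1)` (so `X 0 = 0` when `S 0 = 0`). -/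
def Xproc (S : ℕ → Ω → ℕ) (n : ℕ) (ω : Ω) : ℕ := S n ω - S (n - 1) ω

/-- `(J, S)` is a Markov renewal chain with semi-Markov kernel `q` under the family of
probability measures `P i₀` (the chain starting at `i₀`):  `J 0 = i₀`, `S 0 = 0` a.s., and
the process `(J, X)` is a time-homogeneous Markov chain with transitions
`P(J_{n+1} = j, X_{n+1} = k | J_n = i, past) = q i j k`. -/
def IsMarkovRenewalChain (P : E → Measure Ω) (J : ℕ → Ω → E) (S : ℕ → Ω → ℕ)
    (q : E → E → ℕ → ℝ) : Prop :=
  (∀ i, IsProbabilityMeasure (P i)) ∧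
  (∀ n i, MeasurableSet {ω | J n ω = i}) ∧
  (∀ n k, MeasurableSet {ω | S n ω = k}) ∧
  (∀ i₀, P i₀ {ω | J 0 ω = i₀ ∧ S 0 ω = 0} = 1) ∧
  (∀ i₀ (n : ℕ) (js : ℕ → E) (xs : ℕ → ℕ),
    P i₀ ({ω | J (n+1) ω = js (n+1) ∧ Xproc S (n+1) ω = xs (n+1)} ∩
        {ω | ∀ l ≤ n, J l ω = js l ∧ Xproc S l ω = xs l}) =
      ENNReal.ofReal (q (js n) (js (n+1)) (xs (n+1))) *
        P i₀ {ω | ∀ l ≤ n, J l ω = js l ∧ Xproc S l ω = xs l})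

/-- First hitting time (after time `0`) of the state `j` by the embedded chain `J`. -/
def tau (J : ℕ → Ω → E) (j : E) (ω : Ω) : ℕ := sInf {n | 1 ≤ n ∧ J n ω = j}

/-- Mean recurrence time `μ_{ii} = E_i[S_{τ_i}]`. -/
def mrt (P : E → Measure Ω) (J : ℕ → Ω → E) (S : ℕ → Ω → ℕ) (i : E) : ℝ :=
  ∫ ω, (S (tau J i ω) ω : ℝ) ∂(P i)

/-- Assumption (A): irreducibility of the embedded chain, aperiodicity of the Markov
renewal chain, and positive recurrence. -/
def AssumptionA (P : E → Measure Ω) (J : ℕ → Ω → E) (S : ℕ → Ω → ℕ) : Prop :=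
  (∀ i j : E, 0 < P i {ω | ∃ n, 1 ≤ n ∧ J n ω = j}) ∧
  (∀ i : E, ∀ d : ℕ,
      (∀ k, 0 < P i {ω | S (tau J i ω) ω = k} → d ∣ k) → d = 1) ∧
  (∀ i : E, (∀ᵐ ω ∂(P i), ∃ n, 1 ≤ n ∧ J n ω = i) ∧
      Integrable (fun ω => (S (tau J i ω) ω : ℝ)) (P i))

/-- `N(M)`: the number of jumps of the Markov renewal chain up to time `M`. -/
def Ncnt (S : ℕ → Ω → ℕ) (M : ℕ) (ω : Ω) : ℕ := sSup {n | S n ω ≤ M}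

/-- `N_i(M)`: the number of visits of the embedded chain to `i` before time `M`. -/
def Nvis (J : ℕ → Ω → E) (S : ℕ → Ω → ℕ) (i : E) (M : ℕ) (ω : Ω) : ℕ :=
  ∑ n ∈ Finset.Icc 1 (Ncnt S M ω), if J (n-1) ω = i then 1 else 0

/-- The empirical (nonparametric) estimator `q̂(M)` of the semi-Markov kernel. -/
def qhat (J : ℕ → Ω → E) (S : ℕ → Ω → ℕ) (M : ℕ) (ω : Ω) (i j : E) (k : ℕ) : ℝ :=
  (∑ n ∈ Finset.Icc 1 (Ncnt S M ω),
      if J (n-1) ω = i ∧ J n ω = j ∧ Xproc S n ω = k then (1:ℝ) else 0) /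
    (Nvis J S i M ω : ℝ)

/-- The entry of a matrix sequence at `e = (i, j, k)`. -/
def entry (A : E → E → ℕ → ℝ) (e : E × E × ℕ) : ℝ := A e.1 e.2.1 e.2.2

/-- Matrix convolution of matrix sequences. -/
def mconv (A B : E → E → ℕ → ℝ) : E → E → ℕ → ℝ := fun i j k =>
  ∑ l ∈ Finset.range (k+1), ∑ u, A i u l * B u j (k - l)

/-- Convolution of scalar sequences. -/
def sconv (a b : ℕ → ℝ) : ℕ → ℝ := fun k => ∑ l ∈ Finset.range (k+1), a l * b (k - l)

/-- The identity `δI` for matrix convolution. -/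
def deltaI : E → E → ℕ → ℝ := fun i j k => if i = j ∧ k = 0 then 1 else 0

/-- `n`-fold matrix convolution power. -/
def mpow (A : E → E → ℕ → ℝ) : ℕ → E → E → ℕ → ℝ
  | 0 => deltaI
  | n + 1 => mconv A (mpow A n)

/-- The convolution inverse `(δI − A)^{(−1)} = ∑_{n ≥ 0} A^{(n)}`. -/
def psiOf (A : E → E → ℕ → ℝ) : E → E → ℕ → ℝ := fun i j k => ∑' n, mpow A n i j k

/-- The operator `S`: `(S A)_{ij}(k) = 1{i=j} ∑_{j'} ∑_{k' > k} A_{ij'}(k')`. -/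
def Sop (A : E → E → ℕ → ℝ) : E → E → ℕ → ℝ := fun i j k =>
  if i = j then ∑' p : E × ℕ, if k < p.2 then A i p.1 p.2 else 0 else 0

/-- Cumulative sum of a scalar sequence, `(cumul a) k = ∑_{l ≤ k} a l`. -/
def cumul (a : ℕ → ℝ) (k : ℕ) : ℝ := ∑ l ∈ Finset.range (k+1), a l

/-- `H_j(k) = ∑_{j'} ∑_{k' ≤ k} q_{jj'}(k')`, the sojourn time c.d.f. in state `j`. -/
def Hseq (q : E → E → ℕ → ℝ) (j : E) (k : ℕ) : ℝ :=
  ∑ j', ∑ l ∈ Finset.range (k+1), q j j' l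

/-- The matrix sequence `δ^{et}` with entry `1` at `et` and `0` elsewhere. -/
def deltaM (et : E × E × ℕ) : E → E → ℕ → ℝ := fun i j k => if (i, j, k) = et then 1 else 0

/-- The matrix sequence `q^{it}` with `q^{it}_{ij}(k) = 1{i = it} q_{ij}(k)`. -/
def qres (q : E → E → ℕ → ℝ) (it : E) : E → E → ℕ → ℝ :=
  fun i j k => if i = it then q i j k else 0

/-- The semi-Markov chain `Z_k = J_{N(k)}` associated to `(J, S)`. -/
def Zproc (J : ℕ → Ω → E) (S : ℕ → Ω → ℕ) (k : ℕ) (ω : Ω) : E := J (Ncnt S k ω) ω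

/-- The distribution matrix sequence `P_{ij}(k) = P_i(Z_k = j)` of the semi-Markov chain. -/
def Pdist (P : E → Measure Ω) (J : ℕ → Ω → E) (S : ℕ → Ω → ℕ) (i j : E) (k : ℕ) : ℝ :=
  (P i {ω | Zproc J S k ω = j}).toReal

/-- The estimator `P̂(M) = ψ̂(M) * S q̂(M)` of the distribution matrix sequence. -/
def Phat (J : ℕ → Ω → E) (S : ℕ → Ω → ℕ) (M : ℕ) (ω : Ω) : E → E → ℕ → ℝ :=
  mconv (psiOf (qhat J S M ω)) (Sop (qhat J S M ω))

/-- The reliability vector sequence `R_i(k) = P_i(T_D > k)`, for `i ∈ U`,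
where `D = Uᶜ` and `T_D` is the first entrance time of `Z` into `D`. -/
def Rrel (P : E → Measure Ω) (J : ℕ → Ω → E) (S : ℕ → Ω → ℕ) (U : Finset E)
    (i : E) (k : ℕ) : ℝ :=
  (P i {ω | ∀ l ≤ k, Zproc J S l ω ∈ U}).toReal

/-- Restriction of a matrix sequence to `Ũ = U × U × ℕ` (extended by `0`). -/
def restrictUU (U : Finset E) (A : E → E → ℕ → ℝ) : E → E → ℕ → ℝ :=
  fun i j k => if i ∈ U ∧ j ∈ U then A i j k else 0

/-- Convolution of a matrix sequence with a vector sequence. -/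
def mvconv (A : E → E → ℕ → ℝ) (v : E → ℕ → ℝ) : E → ℕ → ℝ := fun i k =>
  ∑ l ∈ Finset.range (k+1), ∑ u, A i u l * v u (k - l)

/-- The diagonal `(A)_U` of a matrix sequence, as a vector sequence. -/
def diagOf (A : E → E → ℕ → ℝ) : E → ℕ → ℝ := fun i k => A i i k

/-- The estimator `R̂(M) = ψ̂_UU(M) * (S q̂(M))_U` of the reliability vector sequence. -/
def Rhat (J : ℕ → Ω → E) (S : ℕ → Ω → ℕ) (U : Finset E) (M : ℕ) (ω : Ω) : E → ℕ → ℝ :=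
  mvconv (psiOf (restrictUU U (qhat J S M ω))) (diagOf (Sop (qhat J S M ω)))

/-- `μG` is the law of a centered Gaussian family indexed by `ι` with covariance `V`:
every finite linear combination of coordinates has a centered normal distribution with the
appropriate variance. -/
def IsCenteredGaussianLaw {ι : Type} (μG : Measure (ι → ℝ)) (V : ι → ι → ℝ) : Prop :=
  ∀ a : ι →₀ ℝ,
    Measure.map (fun x => ∑ e ∈ a.support, a e * x e) μG =
      gaussianReal 0
        (Real.toNNReal (∑ e ∈ a.support, ∑ e' ∈ a.support, a e * V e e' * a e'))

/-- `(Z_e)_{e ∈ ι}` is a centered Gaussian family with covariance `V` under `P`. -/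
def IsCenteredGaussianFamily {ι : Type} (P : Measure Ω) (Z : ι → Ω → ℝ)
    (V : ι → ι → ℝ) : Prop :=
  (∀ e, Measurable (Z e)) ∧
  ∀ a : ι →₀ ℝ,
    Measure.map (fun ω => ∑ e ∈ a.support, a e * Z e ω) P =
      gaussianReal 0
        (Real.toNNReal (∑ e ∈ a.support, ∑ e' ∈ a.support, a e * V e e' * a e'))

/-- The covariance matrix `V^q` of the CLT for `q̂`, with `μr i = μ_{ii}`. -/
def Vq (q : E → E → ℕ → ℝ) (μr : E → ℝ) : (E × E × ℕ) → (E × E × ℕ) → ℝ := fun e e' =>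
  μr e.1 * (if e.1 = e'.1 then 1 else 0) * entry q e *
    ((if e.2.1 = e'.2.1 ∧ e.2.2 = e'.2.2 then 1 else 0) - entry q e')


/-- `ψ * δ^{et} * ψ * S q + ψ * S δ^{et}`. -/
def FPm (q : E → E → ℕ → ℝ) (et : E × E × ℕ) : E → E → ℕ → ℝ := fun i j k =>
  mconv (mconv (mconv (psiOf q) (deltaM et)) (psiOf q)) (Sop q) i j k +
    mconv (psiOf q) (Sop (deltaM et)) i j k

/-- `ψ * q^{it} * ψ * S q + ψ * S q^{it}`. -/
def GPm (q : E → E → ℕ → ℝ) (it : E) : E → E → ℕ → ℝ := fun i j k =>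
  mconv (mconv (mconv (psiOf q) (qres q it)) (psiOf q)) (Sop q) i j k +
    mconv (psiOf q) (Sop (qres q it)) i j k

/-- The asymptotic covariance matrix `V^P` for the estimator of the distribution
matrix sequence. -/
def VP (q : E → E → ℕ → ℝ) (μr : E → ℝ) : (E × E × ℕ) → (E × E × ℕ) → ℝ := fun e e' =>
  (∑' et : E × E × ℕ,
      μr et.1 * entry q et * (entry (FPm q et) e * entry (FPm q et) e')) -
    ∑ it, μr it * (entry (GPm q it) e * entry (GPm q it) e')

/-- `C^{ij}_{ĩ j̃} = ψ_{i ĩ} * ψ_{j̃ j} * (1 − H_j)`. -/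
def Cseq (q : E → E → ℕ → ℝ) (i j it jt : E) : ℕ → ℝ :=
  sconv (sconv (psiOf q i it) (psiOf q jt j)) (fun k => 1 - Hseq q j k)

/-- The asymptotic variance `v^P(i,j,k)` for the estimator of the distribution
matrix sequence. -/
def vP (q : E → E → ℕ → ℝ) (μr : E → ℝ) (i j : E) (k : ℕ) : ℝ :=
  ∑ it, μr it *
    ((∑ jt, sconv
        (fun l => (Cseq q i j it jt l - (if it = j then 1 else 0) * cumul (psiOf q i j) l)^2)
        (q it jt) k) -
     (∑ jt, sconv (Cseq q i j it jt) (q it jt) k -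
        (if it = j then 1 else 0) * sconv (psiOf q i j) (Hseq q j) k)^2)


section Aux

set_option linter.unusedSectionVars false

lemma sconv_coeff (a b : ℕ → ℝ) (k : ℕ) :
    sconv a b k = PowerSeries.coeff k (PowerSeries.mk a * PowerSeries.mk b) := by
  rw [PowerSeries.coeff_mul, Finset.Nat.sum_antidiagonal_eq_sum_range_succ_mk]
  simp [sconv]

lemma mk_sconv (a b : ℕ → ℝ) :
    PowerSeries.mk (sconv a b) = PowerSeries.mk a * PowerSeries.mk b := by
  ext k; rw [PowerSeries.coeff_mk, sconv_coeff]

lemma cumul_eq_sconv (a : ℕ → ℝ) : cumul a = sconv a (fun _ => (1:ℝ)) := by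
  funext k; simp [cumul, sconv]

lemma sconv_comm (a b : ℕ → ℝ) : sconv a b = sconv b a := by
  funext k; rw [sconv_coeff, sconv_coeff, mul_comm]

lemma sconv_cumul_swap (a b : ℕ → ℝ) : sconv a (cumul b) = sconv b (cumul a) := by
  funext n
  rw [cumul_eq_sconv, cumul_eq_sconv, sconv_coeff, sconv_coeff, mk_sconv, mk_sconv]
  congr 1; ring

lemma sconv_perm (a b c d : ℕ → ℝ) :
    sconv (sconv (sconv a b) c) d = sconv (sconv (sconv a c) d) b := by
  funext n
  rw [sconv_coeff, sconv_coeff, mk_sconv, mk_sconv, mk_sconv, mk_sconv]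
  congr 1; ring

lemma sum_sub_single (c : ℕ → ℝ) (k₁ l : ℕ) :
    (∑ l' ∈ Finset.range (l+1), if l - l' = k₁ then c l' else 0)
      = if k₁ ≤ l then c (l - k₁) else 0 := by
  rcases le_or_gt k₁ l with h | h
  · rw [if_pos h, Finset.sum_eq_single_of_mem (l - k₁) (by simp <;> omega)]
    · rw [if_pos (by omega)]
    · intro l' hl' hne; simp at hl'; rw [if_neg (by omega)]
  · rw [if_neg (by omega)]
    apply Finset.sum_eq_zero; intro l' hl'; simp at hl'; rw [if_neg (by omega)]

lemma sum_delay (f g : ℕ → ℝ) (k₁ k : ℕ) :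
    ∑ m ∈ Finset.range (k+1), (if k₁ ≤ m then f (m - k₁) else 0) * g (k - m)
      = if k₁ ≤ k then sconv f g (k - k₁) else 0 := by
  rcases le_or_gt k₁ k with h | h
  · rw [if_pos h]
    rw [Finset.range_eq_Ico, ← Finset.sum_Ico_consecutive _ (Nat.zero_le k₁) (by omega : k₁ ≤ k+1)]
    have h1 : ∑ m ∈ Finset.Ico 0 k₁, (if k₁ ≤ m then f (m - k₁) else 0) * g (k - m) = 0 := by
      apply Finset.sum_eq_zero; intro m hm; simp at hm; rw [if_neg (by omega)]; ring
    rw [h1, zero_add, Finset.sum_Ico_eq_sum_range]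
    have h2 : k + 1 - k₁ = k - k₁ + 1 := by omega
    rw [h2, sconv]
    apply Finset.sum_congr rfl; intro l hl; simp at hl
    rw [if_pos (by omega)]
    congr 2 <;> omega
  · rw [if_neg (by omega)]
    apply Finset.sum_eq_zero; intro m hm; simp at hm; rw [if_neg (by omega)]; ring

lemma sum_tail (c : ℕ → ℝ) (k₁ k : ℕ) :
    ∑ l ∈ Finset.range (k+1), (if k - l < k₁ then c l else 0)
      = cumul c k - (if k₁ ≤ k then cumul c (k - k₁) else 0) := by
  have key : ∑ l ∈ Finset.range (k+1), (if k₁ ≤ k - l then c l else 0)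
      = (if k₁ ≤ k then cumul c (k - k₁) else 0) := by
    rcases le_or_gt k₁ k with h | h
    · rw [if_pos h, cumul,
        ← Finset.sum_subset (Finset.range_subset_range.2 (by omega : k - k₁ + 1 ≤ k + 1))]
      · apply Finset.sum_congr rfl; intro l hl; simp at hl; rw [if_pos (by omega)]
      · intro x hx hx'; simp at hx hx'; rw [if_neg (by omega)]
    · rw [if_neg (by omega)]; apply Finset.sum_eq_zero
      intro l hl; simp at hl; rw [if_neg (by omega)]
  have expand : cumul c k = ∑ l ∈ Finset.range (k+1),
      ((if k - l < k₁ then c l else 0) + (if k₁ ≤ k - l then c l else 0)) := by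
    rw [cumul]; apply Finset.sum_congr rfl; intro l hl
    rcases lt_or_ge (k - l) k₁ with h | h
    · rw [if_pos h, if_neg (by omega)]; ring
    · rw [if_neg (by omega), if_pos h]; ring
  rw [Finset.sum_add_distrib, key] at expand
  linarith

variable {q : E → E → ℕ → ℝ}

lemma hasSum_tail (hq : IsSemiMarkovKernel q) (u : E) (m : ℕ) :
    HasSum (fun p : E × ℕ => if m < p.2 then q u p.1 p.2 else 0) (1 - Hseq q u m) := by
  have h1 := hq.2.2 u
  have h2 : HasSum (fun p : E × ℕ => if m < p.2 then 0 else q u p.1 p.2) (Hseq q u m) := by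
    have h3 := hasSum_sum_of_ne_finset_zero
      (s := (Finset.univ : Finset E) ×ˢ Finset.range (m+1))
      (L := SummationFilter.unconditional _)
      (f := fun p : E × ℕ => if m < p.2 then 0 else q u p.1 p.2) ?_
    · convert h3 using 1
      rw [Finset.sum_product]
      unfold Hseq
      apply Finset.sum_congr rfl; intro j' _
      apply Finset.sum_congr rfl; intro l hl
      simp only [Finset.mem_range] at hl
      rw [if_neg (by omega)]
    · intro p hp
      simp only [Finset.mem_product, Finset.mem_univ, Finset.mem_range, true_and,
        not_lt] at hp
      have : m < p.2 := by omega
      simp [this]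
  have e : (fun p : E × ℕ => if m < p.2 then q u p.1 p.2 else 0)
      = fun p => q u p.1 p.2 - (if m < p.2 then 0 else q u p.1 p.2) := by
    funext p; by_cases h : m < p.2 <;> simp [h]
  rw [e]; exact h1.sub h2

lemma Sop_q (hq : IsSemiMarkovKernel q) (u v : E) (m : ℕ) :
    Sop q u v m = if u = v then 1 - Hseq q u m else 0 := by
  unfold Sop
  by_cases h : u = v
  · simp only [if_pos h]; exact (hasSum_tail hq u m).tsum_eq
  · simp [h]

lemma Sop_qres (hq : IsSemiMarkovKernel q) (it u v : E) (m : ℕ) :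
    Sop (qres q it) u v m = if u = v ∧ u = it then 1 - Hseq q u m else 0 := by
  unfold Sop qres
  by_cases h : u = v
  · subst h
    by_cases h2 : u = it
    · subst h2
      simp only [if_pos rfl, and_self]
      exact (hasSum_tail hq u m).tsum_eq
    · simp [h2]
  · simp [h]

lemma Sop_deltaM (et : E × E × ℕ) (u v : E) (m : ℕ) :
    Sop (deltaM et) u v m = if u = v ∧ u = et.1 ∧ m < et.2.2 then 1 else 0 := by
  obtain ⟨i₁, j₁, k₁⟩ := et
  unfold Sop deltaM
  by_cases h : u = v
  · simp only [if_pos h]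
    have e : (fun p : E × ℕ =>
        if m < p.2 then (if (u, p.1, p.2) = (i₁, j₁, k₁) then (1:ℝ) else 0) else 0)
        = fun p => if p = (j₁, k₁) then (if u = i₁ ∧ m < k₁ then 1 else 0) else 0 := by
      funext p
      obtain ⟨p1, p2⟩ := p
      simp only [Prod.mk.injEq]
      split_ifs <;> simp_all
    rw [e, tsum_ite_eq]
    by_cases h1 : u = i₁ <;> by_cases h2 : m < k₁ <;> simp [h, h1, h2]
  · simp [h]

lemma mconv_psi_deltaM (et : E × E × ℕ) (i u : E) (l : ℕ) :
    mconv (psiOf q) (deltaM et) i u l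
      = if u = et.2.1 ∧ et.2.2 ≤ l then psiOf q i et.1 (l - et.2.2) else 0 := by
  obtain ⟨i₁, j₁, k₁⟩ := et
  unfold mconv deltaM
  have inner : ∀ l', (∑ v, psiOf q i v l' * if (v, u, l - l') = (i₁, j₁, k₁) then (1:ℝ) else 0)
      = if u = j₁ ∧ l - l' = k₁ then psiOf q i i₁ l' else 0 := by
    intro l'
    rw [Finset.sum_eq_single i₁]
    · by_cases h1 : u = j₁ <;> by_cases h2 : l - l' = k₁ <;> simp [h1, h2, Prod.ext_iff]
    · intro v _ hv; simp [Prod.ext_iff, hv]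
    · simp
  simp only [inner]
  by_cases h1 : u = j₁
  · simp only [h1, true_and]
    exact sum_sub_single _ _ _
  · simp [h1]

lemma mconv2_deltaM (et : E × E × ℕ) (i u' : E) (m : ℕ) :
    mconv (mconv (psiOf q) (deltaM et)) (psiOf q) i u' m
      = if et.2.2 ≤ m then sconv (psiOf q i et.1) (psiOf q et.2.1 u') (m - et.2.2) else 0 := by
  obtain ⟨i₁, j₁, k₁⟩ := et
  rw [show mconv (mconv (psiOf q) (deltaM (i₁, j₁, k₁))) (psiOf q) i u' m
      = ∑ l ∈ Finset.range (m+1), ∑ u,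
          mconv (psiOf q) (deltaM (i₁, j₁, k₁)) i u l * psiOf q u u' (m - l) from rfl]
  simp only [mconv_psi_deltaM]
  have inner : ∀ l, (∑ u, (if u = (i₁,j₁,k₁).2.1 ∧ (i₁,j₁,k₁).2.2 ≤ l then
        psiOf q i (i₁,j₁,k₁).1 (l - (i₁,j₁,k₁).2.2) else 0) * psiOf q u u' (m - l))
      = (if k₁ ≤ l then psiOf q i i₁ (l - k₁) else 0) * psiOf q j₁ u' (m - l) := by
    intro l
    rw [Finset.sum_eq_single j₁]
    · by_cases h : k₁ ≤ l <;> simp [h]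
    · intro v _ hv; simp [hv]
    · simp
  simp only [inner]
  exact sum_delay _ _ _ _

lemma T1_deltaM (hq : IsSemiMarkovKernel q) (et : E × E × ℕ) (i j : E) (k : ℕ) :
    mconv (mconv (mconv (psiOf q) (deltaM et)) (psiOf q)) (Sop q) i j k
      = if et.2.2 ≤ k then Cseq q i j et.1 et.2.1 (k - et.2.2) else 0 := by
  obtain ⟨i₁, j₁, k₁⟩ := et
  rw [show mconv (mconv (mconv (psiOf q) (deltaM (i₁,j₁,k₁))) (psiOf q)) (Sop q) i j k
      = ∑ m ∈ Finset.range (k+1), ∑ u',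
          mconv (mconv (psiOf q) (deltaM (i₁,j₁,k₁))) (psiOf q) i u' m * Sop q u' j (k - m) from rfl]
  have inner : ∀ m, (∑ u',
        mconv (mconv (psiOf q) (deltaM (i₁,j₁,k₁))) (psiOf q) i u' m * Sop q u' j (k - m))
      = (if k₁ ≤ m then sconv (psiOf q i i₁) (psiOf q j₁ j) (m - k₁) else 0)
          * (1 - Hseq q j (k - m)) := by
    intro m
    rw [Finset.sum_eq_single j]
    · rw [mconv2_deltaM, Sop_q hq, if_pos rfl]
    · intro v _ hv; rw [Sop_q hq, if_neg hv, mul_zero]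
    · simp
  simp only [inner]
  rw [show Cseq q i j i₁ j₁
      = sconv (sconv (psiOf q i i₁) (psiOf q j₁ j)) (fun n => 1 - Hseq q j n) from rfl]
  exact sum_delay (sconv (psiOf q i i₁) (psiOf q j₁ j)) (fun n => 1 - Hseq q j n) k₁ k

lemma T2_deltaM (et : E × E × ℕ) (i j : E) (k : ℕ) :
    mconv (psiOf q) (Sop (deltaM et)) i j k
      = (if et.1 = j then 1 else 0) *
        (cumul (psiOf q i j) k - (if et.2.2 ≤ k then cumul (psiOf q i j) (k - et.2.2) else 0)) := by
  obtain ⟨i₁, j₁, k₁⟩ := et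
  rw [show mconv (psiOf q) (Sop (deltaM (i₁,j₁,k₁))) i j k
      = ∑ l ∈ Finset.range (k+1), ∑ u, psiOf q i u l * Sop (deltaM (i₁,j₁,k₁)) u j (k - l) from rfl]
  have inner : ∀ l, (∑ u, psiOf q i u l * Sop (deltaM (i₁,j₁,k₁)) u j (k - l))
      = if i₁ = j ∧ k - l < k₁ then psiOf q i j l else 0 := by
    intro l
    rw [Finset.sum_eq_single j]
    · rw [Sop_deltaM]
      by_cases h1 : i₁ = j
      · subst h1; by_cases h2 : k - l < k₁ <;> simp [h2]
      · rw [if_neg (by rintro ⟨-, h, -⟩; exact h1 h.symm), mul_zero,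
          if_neg (by tauto)]
    · intro v _ hv; rw [Sop_deltaM, if_neg (by tauto), mul_zero]
    · simp
  simp only [inner]
  by_cases h1 : i₁ = j
  · simp only [h1, eq_self_iff_true, true_and, if_true, one_mul]
    exact sum_tail _ _ _
  · simp [h1]

end Aux


section Aux2

set_option linter.unusedSectionVars false

variable {q : E → E → ℕ → ℝ}

def AetD (q : E → E → ℕ → ℝ) (i j : E) (k : ℕ) (et : E × E × ℕ) : ℝ :=
  if et.2.2 ≤ k then
    Cseq q i j et.1 et.2.1 (k - et.2.2)
      - (if et.1 = j then 1 else 0) * cumul (psiOf q i j) (k - et.2.2)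
  else 0

def bD (q : E → E → ℕ → ℝ) (i j : E) (k : ℕ) (it : E) : ℝ :=
  (if it = j then 1 else 0) * cumul (psiOf q i j) k

def SBD (q : E → E → ℕ → ℝ) (i j : E) (k : ℕ) (it : E) : ℝ :=
  ∑ jt, sconv (Cseq q i j it jt) (q it jt) k
    - (if it = j then 1 else 0) * sconv (psiOf q i j) (Hseq q j) k

lemma FPm_entry (hq : IsSemiMarkovKernel q) (et : E × E × ℕ) (i j : E) (k : ℕ) :
    entry (FPm q et) (i, j, k) = AetD q i j k et + bD q i j k et.1 := by
  obtain ⟨i₁, j₁, k₁⟩ := et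
  show mconv (mconv (mconv (psiOf q) (deltaM (i₁,j₁,k₁))) (psiOf q)) (Sop q) i j k
      + mconv (psiOf q) (Sop (deltaM (i₁,j₁,k₁))) i j k = _
  rw [T1_deltaM hq, T2_deltaM]
  by_cases h1 : i₁ = j <;> by_cases h2 : k₁ ≤ k <;>
    simp [AetD, bD, h1, h2] <;> ring

lemma mconv_psi_qres (it : E) (i u : E) (l : ℕ) :
    mconv (psiOf q) (qres q it) i u l = sconv (psiOf q i it) (q it u) l := by
  rw [show mconv (psiOf q) (qres q it) i u l
      = ∑ l' ∈ Finset.range (l+1), ∑ v, psiOf q i v l' * qres q it v u (l - l') from rfl]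
  have inner : ∀ l', (∑ v, psiOf q i v l' * qres q it v u (l - l'))
      = psiOf q i it l' * q it u (l - l') := by
    intro l'; rw [Finset.sum_eq_single it]
    · simp [qres]
    · intro v _ hv; simp [qres, hv]
    · simp
  simp only [inner]; rfl

lemma mconv2_qres (it : E) (i u' : E) (m : ℕ) :
    mconv (mconv (psiOf q) (qres q it)) (psiOf q) i u' m
      = ∑ u, sconv (sconv (psiOf q i it) (q it u)) (psiOf q u u') m := by
  rw [show mconv (mconv (psiOf q) (qres q it)) (psiOf q) i u' m
      = ∑ l ∈ Finset.range (m+1), ∑ u,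
          mconv (psiOf q) (qres q it) i u l * psiOf q u u' (m - l) from rfl]
  simp only [mconv_psi_qres]
  rw [Finset.sum_comm]
  rfl

lemma T1_qres (hq : IsSemiMarkovKernel q) (it : E) (i j : E) (k : ℕ) :
    mconv (mconv (mconv (psiOf q) (qres q it)) (psiOf q)) (Sop q) i j k
      = ∑ jt, sconv (Cseq q i j it jt) (q it jt) k := by
  rw [show mconv (mconv (mconv (psiOf q) (qres q it)) (psiOf q)) (Sop q) i j k
      = ∑ m ∈ Finset.range (k+1), ∑ u',
          mconv (mconv (psiOf q) (qres q it)) (psiOf q) i u' m * Sop q u' j (k - m) from rfl]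
  have inner : ∀ m, (∑ u',
        mconv (mconv (psiOf q) (qres q it)) (psiOf q) i u' m * Sop q u' j (k - m))
      = ∑ u, sconv (sconv (psiOf q i it) (q it u)) (psiOf q u j) m * (1 - Hseq q j (k - m)) := by
    intro m
    rw [Finset.sum_eq_single j]
    · rw [mconv2_qres, Sop_q hq, if_pos rfl, Finset.sum_mul]
    · intro v _ hv; rw [Sop_q hq, if_neg hv, mul_zero]
    · simp
  simp only [inner]
  rw [Finset.sum_comm]
  apply Finset.sum_congr rfl; intro u _
  have lhs_eq : ∑ m ∈ Finset.range (k+1),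
      sconv (sconv (psiOf q i it) (q it u)) (psiOf q u j) m * (1 - Hseq q j (k - m))
      = sconv (sconv (sconv (psiOf q i it) (q it u)) (psiOf q u j))
          (fun n => 1 - Hseq q j n) k := rfl
  rw [lhs_eq, show Cseq q i j it u
      = sconv (sconv (psiOf q i it) (psiOf q u j)) (fun n => 1 - Hseq q j n) from rfl]
  rw [sconv_perm (psiOf q i it) (q it u) (psiOf q u j) (fun n => 1 - Hseq q j n)]

lemma T2_qres (hq : IsSemiMarkovKernel q) (it : E) (i j : E) (k : ℕ) :
    mconv (psiOf q) (Sop (qres q it)) i j k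
      = (if it = j then 1 else 0)
        * (cumul (psiOf q i j) k - sconv (psiOf q i j) (Hseq q j) k) := by
  rw [show mconv (psiOf q) (Sop (qres q it)) i j k
      = ∑ l ∈ Finset.range (k+1), ∑ u, psiOf q i u l * Sop (qres q it) u j (k - l) from rfl]
  have inner : ∀ l, (∑ u, psiOf q i u l * Sop (qres q it) u j (k - l))
      = if it = j then psiOf q i j l * (1 - Hseq q j (k - l)) else 0 := by
    intro l; rw [Finset.sum_eq_single j]
    · rw [Sop_qres hq]
      by_cases h : it = j
      · subst h; simp
      · rw [if_neg (by rintro ⟨-, h2⟩; exact h h2.symm), mul_zero, if_neg h]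
    · intro v _ hv; rw [Sop_qres hq, if_neg (by tauto), mul_zero]
    · simp
  simp only [inner]
  by_cases h : it = j
  · simp only [h, eq_self_iff_true, if_true, one_mul]
    rw [show (∑ l ∈ Finset.range (k+1), psiOf q i j l * (1 - Hseq q j (k - l)))
        = ∑ l ∈ Finset.range (k+1),
            (psiOf q i j l * 1 - psiOf q i j l * Hseq q j (k - l)) from
      Finset.sum_congr rfl (fun l _ => by ring), Finset.sum_sub_distrib]
    congr 1
    simp [cumul]
  · simp [h]

lemma GPm_entry (hq : IsSemiMarkovKernel q) (it : E) (i j : E) (k : ℕ) :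
    entry (GPm q it) (i, j, k) = SBD q i j k it + bD q i j k it := by
  show mconv (mconv (mconv (psiOf q) (qres q it)) (psiOf q)) (Sop q) i j k
      + mconv (psiOf q) (Sop (qres q it)) i j k = _
  rw [T1_qres hq, T2_qres hq]
  unfold SBD bD
  ring

lemma sconv_Hseq (a : ℕ → ℝ) (u : E) (k : ℕ) :
    sconv a (Hseq q u) k = ∑ jt, sconv (q u jt) (cumul a) k := by
  have e : sconv a (Hseq q u) k
      = ∑ l ∈ Finset.range (k+1), ∑ jt, a l * cumul (q u jt) (k - l) := by
    unfold sconv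
    apply Finset.sum_congr rfl; intro l _
    rw [show Hseq q u (k - l) = ∑ jt, cumul (q u jt) (k - l) from rfl, Finset.mul_sum]
  rw [e, Finset.sum_comm]
  apply Finset.sum_congr rfl; intro jt _
  rw [show (∑ l ∈ Finset.range (k+1), a l * cumul (q u jt) (k - l))
      = sconv a (cumul (q u jt)) k from rfl, sconv_cumul_swap]

lemma SBD_eq (i j : E) (k : ℕ) (it : E) :
    SBD q i j k it
      = ∑ jt, ∑ k₁ ∈ Finset.range (k+1), q it jt k₁ * AetD q i j k (it, jt, k₁) := by
  have e1 : ∀ jt : E, (∑ k₁ ∈ Finset.range (k+1), q it jt k₁ * AetD q i j k (it, jt, k₁))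
      = sconv (Cseq q i j it jt) (q it jt) k
        - (if it = j then 1 else 0) * sconv (q it jt) (cumul (psiOf q i j)) k := by
    intro jt
    have step : ∀ k₁ ∈ Finset.range (k+1), q it jt k₁ * AetD q i j k (it, jt, k₁)
        = q it jt k₁ * Cseq q i j it jt (k - k₁)
          - (if it = j then 1 else 0) * (q it jt k₁ * cumul (psiOf q i j) (k - k₁)) := by
      intro k₁ hk; simp only [Finset.mem_range] at hk
      unfold AetD
      rw [if_pos (show k₁ ≤ k by omega)]
      ring
    rw [Finset.sum_congr rfl step, Finset.sum_sub_distrib, ← Finset.mul_sum]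
    congr 1
    rw [sconv_comm]
    rfl
  rw [Finset.sum_congr rfl (fun jt _ => e1 jt), Finset.sum_sub_distrib, ← Finset.mul_sum]
  unfold SBD
  congr 1
  by_cases h : it = j
  · rw [if_pos h, one_mul, one_mul, h, sconv_Hseq]
  · simp [h]

lemma sq_term (i j : E) (k : ℕ) (it jt : E) :
    sconv (fun l => (Cseq q i j it jt l
        - (if it = j then 1 else 0) * cumul (psiOf q i j) l)^2) (q it jt) k
      = ∑ k₁ ∈ Finset.range (k+1), q it jt k₁ * (AetD q i j k (it, jt, k₁))^2 := by
  rw [sconv_comm]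
  unfold sconv
  apply Finset.sum_congr rfl; intro k₁ hk
  simp only [Finset.mem_range] at hk
  congr 1
  unfold AetD
  rw [if_pos (show k₁ ≤ k by omega)]

lemma hasSum_q_mul (hq : IsSemiMarkovKernel q) (c : E → ℝ) :
    HasSum (fun et : E × E × ℕ => c et.1 * q et.1 et.2.1 et.2.2) (∑ it, c it) := by
  have key : ∀ it : E, HasSum
      (fun et : E × E × ℕ => if et.1 = it then c et.1 * q et.1 et.2.1 et.2.2 else 0)
      (c it) := by
    intro it
    have hinj : Function.Injective (fun p : E × ℕ => ((it, p) : E × E × ℕ)) := by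
      intro a b h; simpa [Prod.ext_iff] using h
    have hvan : ∀ x, x ∉ Set.range (fun p : E × ℕ => ((it, p) : E × E × ℕ)) →
        (if x.1 = it then c x.1 * q x.1 x.2.1 x.2.2 else 0) = 0 := by
      intro x hx
      rw [if_neg]
      intro h
      exact hx ⟨x.2, by rw [← h]⟩
    rw [← Function.Injective.hasSum_iff hinj hvan]
    have hcomp : ((fun et : E × E × ℕ => if et.1 = it then c et.1 * q et.1 et.2.1 et.2.2 else 0)
        ∘ fun p : E × ℕ => ((it, p) : E × E × ℕ)) = fun p : E × ℕ => c it * q it p.1 p.2 := by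
      funext p; simp
    rw [hcomp]
    simpa using (hq.2.2 it).mul_left (c it)
  have total := hasSum_sum (s := (Finset.univ : Finset E))
    (f := fun it (et : E × E × ℕ) => if et.1 = it then c et.1 * q et.1 et.2.1 et.2.2 else 0)
    (a := c) (fun it _ => key it)
  have e : (fun et : E × E × ℕ => ∑ it, if et.1 = it then c et.1 * q et.1 et.2.1 et.2.2 else 0)
      = fun et : E × E × ℕ => c et.1 * q et.1 et.2.1 et.2.2 := by
    funext et; rw [Finset.sum_ite_eq]; simp
  rw [e] at total
  exact total

lemma tsum_main (hq : IsSemiMarkovKernel q) (μr : E → ℝ) (i j : E) (k : ℕ) :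
    (∑' et : E × E × ℕ, μr et.1 * entry q et *
      (entry (FPm q et) (i, j, k) * entry (FPm q et) (i, j, k)))
    = ∑ it, μr it *
        ((∑ jt, ∑ k₁ ∈ Finset.range (k+1), q it jt k₁ * (AetD q i j k (it, jt, k₁))^2)
          + 2 * bD q i j k it * SBD q i j k it + (bD q i j k it)^2) := by
  set G : E × E × ℕ → ℝ := fun et =>
    μr et.1 * q et.1 et.2.1 et.2.2 *
      ((AetD q i j k et)^2 + 2 * AetD q i j k et * bD q i j k et.1) with hGdef
  set s3 : Finset (E × E × ℕ) :=
    (Finset.univ : Finset E) ×ˢ ((Finset.univ : Finset E) ×ˢ Finset.range (k+1)) with hs3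
  have hG : HasSum G (∑ et ∈ s3, G et) := by
    apply hasSum_sum_of_ne_finset_zero
    intro et het
    have hk : ¬ et.2.2 ≤ k := by
      simp only [hs3, Finset.mem_product, Finset.mem_univ, Finset.mem_range, true_and] at het
      omega
    have hA : AetD q i j k et = 0 := by unfold AetD; rw [if_neg hk]
    simp only [hGdef, hA]; ring
  have hH := hasSum_q_mul hq (fun it => μr it * (bD q i j k it)^2)
  have htotal : HasSum (fun et : E × E × ℕ => μr et.1 * entry q et *
      (entry (FPm q et) (i, j, k) * entry (FPm q et) (i, j, k)))
      ((∑ et ∈ s3, G et) + ∑ it, μr it * (bD q i j k it)^2) := by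
    have hadd := hG.add hH
    convert hadd using 1
    funext et
    rw [FPm_entry hq]
    show μr et.1 * q et.1 et.2.1 et.2.2 * _ = _
    simp only [hGdef]
    ring
  rw [htotal.tsum_eq, hs3, Finset.sum_product, ← Finset.sum_add_distrib]
  apply Finset.sum_congr rfl
  intro it _
  rw [Finset.sum_product, SBD_eq]
  have expand : ∀ jt k₁, G (it, jt, k₁)
      = μr it * (q it jt k₁ * (AetD q i j k (it, jt, k₁))^2)
        + (2 * bD q i j k it * μr it) * (q it jt k₁ * AetD q i j k (it, jt, k₁)) := by
    intro jt k₁; simp only [hGdef]; ring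
  simp only [expand]
  simp only [Finset.sum_add_distrib, ← Finset.mul_sum]
  ring

end Aux2

/-- The diagonal entries of `V^P` coincide with the one-dimensional asymptotic
variance `v^P` (Appendix A.2 of the paper). -/
theorem statement18 (q : E → E → ℕ → ℝ) (hq : IsSemiMarkovKernel q)
    (μr : E → ℝ) (hμr : ∀ i, 0 ≤ μr i) (i j : E) (k : ℕ) :
    VP q μr (i, j, k) (i, j, k) = vP q μr i j k := by
  unfold VP vP
  rw [tsum_main hq μr i j k]
  rw [show (∑ it, μr it * (entry (GPm q it) (i, j, k) * entry (GPm q it) (i, j, k)))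
      = ∑ it, μr it * ((SBD q i j k it + bD q i j k it) * (SBD q i j k it + bD q i j k it)) from
    Finset.sum_congr rfl (fun it _ => by rw [GPm_entry hq])]
  rw [← Finset.sum_sub_distrib]
  apply Finset.sum_congr rfl
  intro it _
  rw [show (∑ jt, sconv (fun l => (Cseq q i j it jt l
        - (if it = j then 1 else 0) * cumul (psiOf q i j) l)^2) (q it jt) k)
      = ∑ jt, ∑ k₁ ∈ Finset.range (k+1), q it jt k₁ * (AetD q i j k (it, jt, k₁))^2 from
    Finset.sum_congr rfl (fun jt _ => sq_term i j k it jt)]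
  rw [show (∑ jt, sconv (Cseq q i j it jt) (q it jt) k
      - (if it = j then 1 else 0) * sconv (psiOf q i j) (Hseq q j) k) = SBD q i j k it from rfl]
  ring

end SMCPaper
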